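/- Assume regularity and the relaxed non-degeneracy condition: there exists H* ⊆ H such that the columns {W_{:,h}}_{h ∈ H*} are linearly independent, supp(b) ⊆ H*, and there exists B ⊆ H with H* = ∪_{h ∈ B} supp(A_{:,h}). Then there exist a prompt vector π ∈ [0,1]^{|H|} and u ∈ ℝ^{|X|} such that for all x ∈ X^T with P(X_{1:T} = x) > 0: 1(b^T P(H_0 | X_{1:T} = x) ≥ 0) = 1(u^T v(x) ≥ 0), where v(x) = P(X̂_2 | X̂_1 = z̃, X̂_{3:T+2} = x) if P(X̂_1 = z̃, X̂_{3:T+2} = x) > 0 and v(x) = 0 otherwise, with X̂ the length-(T+2) modified sequence induced by π. -/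

import Mathlib

open scoped Classical

noncomputable section

/-- Forward pass for a Markov chain with transition matrix `A`. -/
def fwdVec {H : Type*} [Fintype H] (A : Matrix H H ℝ) :
    (H → ℝ) → List (H → ℝ) → (H → ℝ)
  | μ, [] => μ
  | μ, v :: vs => fwdVec A (A.mulVec fun h => μ h * v h) vs

/-- `hmmLik A W x h = P(X_{1:t} = x | H_0 = h)`. -/
def hmmLik {H X : Type*} [Fintype H] (A : Matrix H H ℝ)
    (W : X → H → ℝ) : List X → H → ℝ
  | [], _ => 1
  | z :: xs, h => ∑ h' : H, A h' h * W z h' * hmmLik A W xs h'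

/-- `phatH2 A μ W π x g = P(X̂_1 = z̃, H_2 = g, X̂_{3:T+2} = x)` for the
length-`(T+2)` modified sequence `X̂` induced by the prompt `π`. -/
def phatH2 {H X : Type*} [Fintype H] [DecidableEq H] (A : Matrix H H ℝ)
    (μ : H → ℝ) (W : X → H → ℝ) (π : H → ℝ) {T : ℕ} (x : Fin T → X)
    (g : H) : ℝ :=
  ∑ h, fwdVec A (A.mulVec μ)
    (π :: (fun g' => if g' = g then 1 else 0)
      :: List.ofFn fun k : Fin T => fun g' => W (x k) g') h

lemma hmmLik_nonneg {H X : Type*} [Fintype H] (A : Matrix H H ℝ) (W : X → H → ℝ)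
    (hA0 : ∀ h h', 0 ≤ A h' h) (hW0 : ∀ z h, 0 ≤ W z h) :
    ∀ (xs : List X) (h : H), 0 ≤ hmmLik A W xs h
  | [], h => by simp [hmmLik]
  | z :: xs, h => by
    unfold hmmLik
    exact Finset.sum_nonneg fun h' _ =>
      mul_nonneg (mul_nonneg (hA0 _ _) (hW0 _ _)) (hmmLik_nonneg A W hA0 hW0 xs h')

lemma sumFwd {H X : Type*} [Fintype H] (A : Matrix H H ℝ) (W : X → H → ℝ)
    (hA1 : ∀ h, ∑ h', A h' h = 1) :
    ∀ (xs : List X) (ν : H → ℝ),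
      ∑ h, fwdVec A (A.mulVec ν) (xs.map fun z => fun h => W z h) h
        = ∑ h, ν h * hmmLik A W xs h
  | [], ν => by
    simp only [List.map_nil, fwdVec, hmmLik, mul_one, Matrix.mulVec, dotProduct]
    rw [Finset.sum_comm]
    simp [← Finset.sum_mul, hA1]
  | z :: xs, ν => by
    simp only [List.map_cons, fwdVec]
    rw [sumFwd A W hA1 xs]
    simp only [Matrix.mulVec, dotProduct, hmmLik, Finset.sum_mul, Finset.mul_sum]
    rw [Finset.sum_comm]
    apply Finset.sum_congr rfl; intro h _
    apply Finset.sum_congr rfl; intro g _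
    ring

lemma phat_eq {H X : Type*} [Fintype H] [DecidableEq H] (A : Matrix H H ℝ)
    (μ : H → ℝ) (W : X → H → ℝ) (π : H → ℝ) (hA1 : ∀ h, ∑ h', A h' h = 1)
    {T : ℕ} (x : Fin T → X) (g : H) :
    phatH2 A μ W π x g =
      (A.mulVec fun h => (A.mulVec μ) h * π h) g * hmmLik A W (List.ofFn x) g := by
  have hofn : (List.ofFn fun k : Fin T => fun g' => W (x k) g')
      = (List.ofFn x).map fun z => fun h => W z h := by
    rw [List.map_ofFn]; rfl
  unfold phatH2
  simp only [fwdVec, hofn]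
  rw [sumFwd A W hA1]
  rw [Finset.sum_eq_single g]
  · simp
  · intro h _ hne; simp [hne]
  · simp

lemma exists_u {H X : Type*} [Fintype H] [Fintype X] (W : X → H → ℝ)
    (Hstar : Finset H)
    (hli : LinearIndependent ℝ
      (fun h : {h : H // h ∈ Hstar} => fun z : X => W z h.1))
    (t : H → ℝ) :
    ∃ u : X → ℝ, ∀ g ∈ Hstar, ∑ z, u z * W z g = t g := by
  classical
  set v : {h : H // h ∈ Hstar} → (X → ℝ) := fun h => fun z => W z h.1 with hv
  let bV := Module.Basis.span hli
  let f : Submodule.span ℝ (Set.range v) →ₗ[ℝ] ℝ := bV.constr ℝ (fun g => t g.1)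
  obtain ⟨φ, hφ⟩ := LinearMap.exists_extend f
  refine ⟨fun z => φ (Pi.single z 1), ?_⟩
  intro g hg
  have hmem : v ⟨g, hg⟩ ∈ Submodule.span ℝ (Set.range v) :=
    Submodule.subset_span (Set.mem_range_self _)
  have h1 : φ (v ⟨g, hg⟩) = t g := by
    have : φ (v ⟨g, hg⟩) = f ⟨v ⟨g, hg⟩, hmem⟩ := by
      rw [← hφ]; rfl
    rw [this]
    have hb : (⟨v ⟨g, hg⟩, hmem⟩ : Submodule.span ℝ (Set.range v)) = bV ⟨g, hg⟩ := by
      apply Subtype.ext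
      rw [Module.Basis.span_apply]
    rw [hb]
    exact bV.constr_basis ℝ _ _
  have h2 : v ⟨g, hg⟩ = ∑ z, W z g • (Pi.single z (1 : ℝ) : X → ℝ) := by
    funext j
    simp only [Finset.sum_apply, Pi.smul_apply, Pi.single_apply, smul_eq_mul,
      mul_ite, mul_one, mul_zero]
    rw [Finset.sum_ite_eq Finset.univ j (fun z => W z g)]
    simp [hv]
  rw [← h1, h2, map_sum]
  simp [mul_comm]

/-!
STATEMENT 5 (Theorem 2 of the paper).

HMM with initial distribution `μ`, transitions `A`, emissions `W`; regularity
holds, and the relaxed non-degeneracy condition: there is `H* = Hstar ⊆ H`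
whose corresponding columns of `W` are linearly independent, with
`supp(b) ⊆ H*`, and a set `B = Bset ⊆ H` with `H* = ⋃_{h ∈ B} supp(A_{:,h})`.
Then there exist a prompt `π ∈ [0,1]^{|H|}` and `u ∈ ℝ^{|X|}` such that for
all `x ∈ X^T` with `P(X_{1:T} = x) > 0`,
`𝟙(bᵀ P(H_0 | X_{1:T} = x) ≥ 0) = 𝟙(uᵀ v(x) ≥ 0)` where
`v(x) = P(X̂_2 | X̂_1 = z̃, X̂_{3:T+2} = x)` if `P(X̂_1 = z̃, X̂_{3:T+2} = x) > 0`
and `v(x) = 0` otherwise.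
-/
theorem stmt5 {H X : Type*} [Fintype H] [Fintype X] [DecidableEq H]
    (μ : H → ℝ) (A : Matrix H H ℝ) (W : X → H → ℝ)
    (hμ0 : ∀ h, 0 ≤ μ h) (hμ1 : ∑ h, μ h = 1)
    (hA0 : ∀ h h', 0 ≤ A h' h) (hA1 : ∀ h, ∑ h', A h' h = 1)
    (hW0 : ∀ z h, 0 ≤ W z h) (hW1 : ∀ h, ∑ z, W z h = 1)
    -- regularity
    (hErg : ∃ n₀ : ℕ, ∀ n ≥ n₀, ∀ h h' : H, 0 < (A ^ n) h' h)
    (hfull : ∀ h, 0 < μ h)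
    (T : ℕ) (b : H → ℝ)
    -- relaxed non-degeneracy condition
    (Hstar Bset : Finset H)
    (hli : LinearIndependent ℝ
      (fun h : {h : H // h ∈ Hstar} => fun z : X => W z h.1))
    (hsupp : ∀ h, b h ≠ 0 → h ∈ Hstar)
    (hreach : ∀ g : H, g ∈ Hstar ↔ ∃ h ∈ Bset, A g h ≠ 0) :
    ∃ π : H → ℝ, (∀ h, 0 ≤ π h ∧ π h ≤ 1) ∧
      ∃ u : X → ℝ, ∀ x : Fin T → X,
        0 < ∑ h, μ h * hmmLik A W (List.ofFn x) h →
        (0 ≤ ∑ h, b h *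
            (μ h * hmmLik A W (List.ofFn x) h /
              ∑ h', μ h' * hmmLik A W (List.ofFn x) h')
          ↔ 0 ≤ ∑ z, u z *
              (if 0 < ∑ g, phatH2 A μ W π x g then
                (∑ g, W z g * phatH2 A μ W π x g) / (∑ g, phatH2 A μ W π x g)
              else 0)) := by
  classical
  obtain ⟨n₀, hergo⟩ := hErg
  -- positivity of P(H_1)
  have hν0 : ∀ h, 0 < A.mulVec μ h := by
    intro h
    rcases lt_or_ge 0 (A.mulVec μ h) with hp | hp
    · exact hp
    exfalso
    have hsum0 : ∑ g, A h g * μ g = 0 :=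
      le_antisymm (by simpa [Matrix.mulVec, dotProduct] using hp)
        (Finset.sum_nonneg fun g _ => mul_nonneg (hA0 g h) (hμ0 g))
    have hz : ∀ g, A h g = 0 := by
      intro g
      have h0 := (Finset.sum_eq_zero_iff_of_nonneg
        (fun g _ => mul_nonneg (hA0 g h) (hμ0 g))).mp hsum0 g (Finset.mem_univ g)
      rcases mul_eq_zero.mp h0 with h1 | h1
      · exact h1
      · exact absurd h1 (ne_of_gt (hfull g))
    have hpos := hergo (n₀ + 1) (Nat.le_succ n₀) h h
    rw [pow_succ', Matrix.mul_apply] at hpos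
    simp [hz] at hpos
  set pr : H → ℝ := fun h => if h ∈ Bset then 1 else 0 with hpr
  set ν1 : H → ℝ := A.mulVec fun h => (A.mulVec μ) h * pr h with hν1def
  have hν1exp : ∀ g, ν1 g = ∑ h, A g h * ((A.mulVec μ) h * pr h) := by
    intro g; simp [hν1def, Matrix.mulVec, dotProduct]
  have hterm_nonneg : ∀ g h, 0 ≤ A g h * ((A.mulVec μ) h * pr h) := by
    intro g h
    apply mul_nonneg (hA0 h g)
    apply mul_nonneg (le_of_lt (hν0 h))
    simp only [hpr]; split <;> norm_num
  have hν1nonneg : ∀ g, 0 ≤ ν1 g := fun g => by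
    rw [hν1exp]; exact Finset.sum_nonneg fun h _ => hterm_nonneg g h
  have hν1pos : ∀ g, g ∈ Hstar ↔ 0 < ν1 g := by
    intro g
    constructor
    · intro hg
      obtain ⟨h, hB, hAne⟩ := (hreach g).mp hg
      rw [hν1exp]
      refine Finset.sum_pos' (fun h _ => hterm_nonneg g h) ⟨h, Finset.mem_univ h, ?_⟩
      have : pr h = 1 := by simp [hpr, hB]
      rw [this, mul_one]
      exact mul_pos (lt_of_le_of_ne (hA0 h g) (Ne.symm hAne)) (hν0 h)
    · intro hgpos
      by_contra hg
      have : ν1 g = 0 := by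
        rw [hν1exp]
        apply Finset.sum_eq_zero
        intro h _
        by_cases hB : h ∈ Bset
        · have : A g h = 0 := by
            by_contra hne
            exact hg ((hreach g).mpr ⟨h, hB, hne⟩)
          simp [this]
        · simp [hpr, hB]
      rw [this] at hgpos; exact lt_irrefl 0 hgpos
  obtain ⟨u, hu⟩ := exists_u W Hstar hli (fun g => b g * μ g / ν1 g)
  refine ⟨pr, fun h => by simp only [hpr]; split <;> norm_num, u, ?_⟩
  intro x hx
  set L : H → ℝ := fun g => hmmLik A W (List.ofFn x) g with hL
  have hLnonneg : ∀ g, 0 ≤ L g := fun g => hmmLik_nonneg A W hA0 hW0 _ g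
  have key : ∀ g, phatH2 A μ W pr x g = ν1 g * L g := fun g =>
    phat_eq A μ W pr hA1 x g
  set Z : ℝ := ∑ h', μ h' * L h' with hZ
  -- b-term equality off Hstar
  have hbzero : ∀ g, g ∉ Hstar → b g = 0 := by
    intro g hg; by_contra hne; exact hg (hsupp g hne)
  have hLHS : (0 ≤ ∑ h, b h * (μ h * L h / Z)) ↔ 0 ≤ ∑ h, b h * (μ h * L h) := by
    have : ∑ h, b h * (μ h * L h / Z) = (∑ h, b h * (μ h * L h)) / Z := by
      rw [Finset.sum_div]
      exact Finset.sum_congr rfl fun h _ => by ring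
    rw [this, le_div_iff₀ hx, zero_mul]
  rw [hLHS]
  by_cases hS : 0 < ∑ g, phatH2 A μ W pr x g
  · simp only [if_pos hS]
    have hmain : ∑ z, u z * ((∑ g, W z g * phatH2 A μ W pr x g) /
        (∑ g, phatH2 A μ W pr x g)) = (∑ h, b h * (μ h * L h)) / (∑ g, phatH2 A μ W pr x g) := by
      simp only [← mul_div_assoc]
      rw [← Finset.sum_div]
      congr 1
      have swap : ∑ z, u z * ∑ g, W z g * phatH2 A μ W pr x g
          = ∑ g, (∑ z, u z * W z g) * phatH2 A μ W pr x g := by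
        simp only [Finset.mul_sum, Finset.sum_mul]
        rw [Finset.sum_comm]
        exact Finset.sum_congr rfl fun g _ => Finset.sum_congr rfl fun z _ => by ring
      rw [swap]
      apply Finset.sum_congr rfl
      intro g _
      by_cases hg : g ∈ Hstar
      · have hν1ne : ν1 g ≠ 0 := ne_of_gt ((hν1pos g).mp hg)
        rw [hu g hg, key g]
        field_simp
      · have h1 : ν1 g = 0 := by
          by_contra hc
          exact hg ((hν1pos g).mpr (lt_of_le_of_ne (hν1nonneg g) (Ne.symm hc)))
        rw [key g, h1, hbzero g hg]
        ring
    rw [hmain, le_div_iff₀ hS, zero_mul]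
  · simp only [if_neg hS, mul_zero, Finset.sum_const_zero]
    have hS0 : ∑ g, phatH2 A μ W pr x g = 0 := by
      have hnn : ∀ g ∈ Finset.univ, 0 ≤ phatH2 A μ W pr x g := fun g _ => by
        rw [key g]; exact mul_nonneg (hν1nonneg g) (hLnonneg g)
      exact le_antisymm (not_lt.mp hS) (Finset.sum_nonneg hnn)
    have hall : ∀ g, phatH2 A μ W pr x g = 0 := by
      intro g
      exact (Finset.sum_eq_zero_iff_of_nonneg (fun g _ => by
        rw [key g]; exact mul_nonneg (hν1nonneg g) (hLnonneg g))).mp hS0 g (Finset.mem_univ g)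
    have hzero : ∑ h, b h * (μ h * L h) = 0 := by
      apply Finset.sum_eq_zero
      intro g _
      by_cases hg : g ∈ Hstar
      · have := hall g
        rw [key g] at this
        rcases mul_eq_zero.mp this with h1 | h1
        · exact absurd h1 (ne_of_gt ((hν1pos g).mp hg))
        · rw [h1]; ring
      · rw [hbzero g hg]; ring
    rw [hzero]

end
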